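/- Assume the abstract linear-stability data (see context). Let T > 0, v₀ ∈ 𝒳, and f : ℝ → 𝒳, and define u(t) := Φ(t)(u*) + S₀(t)(v₀) + f(t). Then for every t ∈ [0,T]: ‖u(t) − Φ(t)( Ψ( exp(t·L)(𝒫 v₀) )(u*) )‖ ≤ M₃·e^{−a·t}·‖v₀‖ + C·M₁·K_T²·‖v₀‖² + ‖f(t)‖. -/

import Mathlib

/-- **Key estimate for the predicted phase** (Lemma 4.1).
Given the abstract linear-stability data (symmetry flow `Φ`, nonlinear symmetry action `Ψ`,
linearized evolution `S₀`, stable projection `Ps`, center-space maps `p, 𝒫, L`), any function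
of the form `u(t) = Φ(t)u* + S₀(t)v₀ + f(t)` satisfies
`‖u(t) − Φ(t)(Ψ(exp(tL)𝒫v₀)u*)‖ ≤ M₃ e^{−at}‖v₀‖ + C M₁ K_T² ‖v₀‖² + ‖f(t)‖` on `[0,T]`. -/
theorem predicted_phase_estimate
    {𝒳 : Type*} [NormedAddCommGroup 𝒳] [NormedSpace ℝ 𝒳] [CompleteSpace 𝒳]
    {g : Type*} [NormedAddCommGroup g] [NormedSpace ℝ g] [FiniteDimensional ℝ g]
    (ustar : 𝒳) (C M₁ M₃ a : ℝ) (hC : 0 < C) (hM₁ : 0 < M₁) (hM₃ : 0 < M₃) (ha : 0 < a)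
    (p : g →L[ℝ] 𝒳) (P : 𝒳 →L[ℝ] g) (L : g →L[ℝ] g)
    (Φ : ℝ → 𝒳 →L[ℝ] 𝒳) (S₀ : ℝ → 𝒳 →L[ℝ] 𝒳) (Ψ : g → 𝒳 →L[ℝ] 𝒳) (Ps : 𝒳 →L[ℝ] 𝒳)
    (hΦBdd : ∀ t : ℝ, 0 ≤ t → ‖Φ t‖ ≤ M₁)
    (hΨTaylor : ∀ Z : g, ‖Ψ Z ustar - ustar - p Z‖ ≤ C * ‖Z‖ ^ 2)
    (hS₀decomp : ∀ t : ℝ, 0 ≤ t → ∀ φ : 𝒳,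
      S₀ t φ = Φ t (p (NormedSpace.exp (t • L) (P φ))) + S₀ t (Ps φ))
    (hStable : ∀ t : ℝ, 0 ≤ t → ‖(S₀ t).comp Ps‖ ≤ M₃ * Real.exp (-a * t))
    (T : ℝ) (hT : 0 < T)
    (KT : ℝ)
    (hKT : KT = ⨆ t : Set.Icc (0 : ℝ) T, ‖(NormedSpace.exp ((t : ℝ) • L)).comp P‖)
    (v₀ : 𝒳) (f : ℝ → 𝒳)
    (u : ℝ → 𝒳) (hu : ∀ t : ℝ, u t = Φ t ustar + S₀ t v₀ + f t) :
    ∀ t ∈ Set.Icc (0 : ℝ) T,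
      ‖u t - Φ t (Ψ (NormedSpace.exp (t • L) (P v₀)) ustar)‖ ≤
        M₃ * Real.exp (-a * t) * ‖v₀‖ + C * M₁ * KT ^ 2 * ‖v₀‖ ^ 2 + ‖f t‖ := by
  intro t ht
  obtain ⟨ht0, htT⟩ := ht
  set Z := NormedSpace.exp (t • L) (P v₀) with hZ
  have key : u t - Φ t (Ψ Z ustar)
      = S₀ t (Ps v₀) + (-(Φ t (Ψ Z ustar - ustar - p Z))) + f t := by
    rw [hu t, hS₀decomp t ht0 v₀]
    simp only [map_sub, map_add]
    abel
  -- boundedness of the sup family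
  have hcont : Continuous fun s : ℝ =>
      ‖(NormedSpace.exp (s • L)).comp P‖ := by
    have h1 : Continuous fun s : ℝ => NormedSpace.exp (s • L) :=
      by letI : NormedAlgebra ℚ (g →L[ℝ] g) := .restrictScalars ℚ ℝ _
         exact NormedSpace.exp_continuous.comp (continuous_id.smul continuous_const)
    have h2 : Continuous fun s : ℝ => (NormedSpace.exp (s • L)).comp P := by
      exact ((ContinuousLinearMap.compL ℝ 𝒳 g g).flip P).continuous.comp h1
    exact h2.norm
  have hbdd : BddAbove (Set.range fun s : Set.Icc (0:ℝ) T =>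
      ‖(NormedSpace.exp ((s : ℝ) • L)).comp P‖) := by
    have := (isCompact_Icc (a := (0:ℝ)) (b := T)).bddAbove_image
      (hcont.continuousOn)
    rcases this with ⟨B, hB⟩
    refine ⟨B, ?_⟩
    rintro x ⟨s, rfl⟩
    exact hB ⟨s, s.2, rfl⟩
  have hKTle : ‖(NormedSpace.exp (t • L)).comp P‖ ≤ KT := by
    rw [hKT]
    exact le_ciSup hbdd ⟨t, ht0, htT⟩
  have hZle : ‖Z‖ ≤ KT * ‖v₀‖ := by
    have : ‖Z‖ ≤ ‖(NormedSpace.exp (t • L)).comp P‖ * ‖v₀‖ :=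
      ((NormedSpace.exp (t • L)).comp P).le_opNorm v₀
    exact this.trans (by gcongr)
  have hZsq : ‖Z‖ ^ 2 ≤ KT ^ 2 * ‖v₀‖ ^ 2 := by
    have h0 : (0:ℝ) ≤ ‖Z‖ := norm_nonneg _
    nlinarith [norm_nonneg v₀, norm_nonneg Z]
  have h1 : ‖S₀ t (Ps v₀)‖ ≤ M₃ * Real.exp (-a * t) * ‖v₀‖ := by
    have := ((S₀ t).comp Ps).le_opNorm v₀
    calc ‖S₀ t (Ps v₀)‖ = ‖((S₀ t).comp Ps) v₀‖ := rfl
      _ ≤ ‖(S₀ t).comp Ps‖ * ‖v₀‖ := this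
      _ ≤ M₃ * Real.exp (-a * t) * ‖v₀‖ := by
          gcongr; exact hStable t ht0
  have h2 : ‖Φ t (Ψ Z ustar - ustar - p Z)‖ ≤ C * M₁ * KT ^ 2 * ‖v₀‖ ^ 2 := by
    calc ‖Φ t (Ψ Z ustar - ustar - p Z)‖
        ≤ ‖Φ t‖ * ‖Ψ Z ustar - ustar - p Z‖ := (Φ t).le_opNorm _
      _ ≤ M₁ * (C * ‖Z‖ ^ 2) := by
          have := hΨTaylor Z
          have hn : (0:ℝ) ≤ ‖Ψ Z ustar - ustar - p Z‖ := norm_nonneg _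
          nlinarith [hΦBdd t ht0, (Φ t).opNorm_nonneg]
      _ ≤ C * M₁ * KT ^ 2 * ‖v₀‖ ^ 2 := by nlinarith [hZsq, mul_pos hC hM₁]
  calc ‖u t - Φ t (Ψ Z ustar)‖
      = ‖S₀ t (Ps v₀) + (-(Φ t (Ψ Z ustar - ustar - p Z))) + f t‖ := by rw [key]
    _ ≤ ‖S₀ t (Ps v₀)‖ + ‖-(Φ t (Ψ Z ustar - ustar - p Z))‖ + ‖f t‖ := norm_add₃_le
    _ ≤ M₃ * Real.exp (-a * t) * ‖v₀‖ + C * M₁ * KT ^ 2 * ‖v₀‖ ^ 2 + ‖f t‖ := by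
        rw [norm_neg]; gcongr
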